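/- Let p be a prime and let k be the field with p elements. Let K be a field extension of k, let X be a subset of K which is a transcendence set over k, and let L = k(X) be the subfield of K generated by k and X. Let γ be a k-monomorphism of L such that for each x ∈ X there is a non-negative integer n_x with γ(x) = x^{p^{n_x}}. Let N be an integer satisfying N > n_x for all x ∈ X. If a ∈ L satisfies γ(a) = a^{p^N}, then a ∈ k. -/

import Mathlib

open MvPolynomial UniqueFactorizationMonoid

/-- Units of a multivariate polynomial ring over a field (finitely many variables,
indexed by `Fin m`) are constants. -/
private lemma mv_isUnit_fin (F : Type*) [Field F] :
    ∀ (m : ℕ) (u : MvPolynomial (Fin m) F), IsUnit u → ∃ c : F, MvPolynomial.C c = u := by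
  intro m
  induction m with
  | zero =>
    intro u _
    exact ⟨u.coeff 0, (MvPolynomial.eq_C_of_isEmpty u).symm⟩
  | succ m ih =>
    intro u hu
    have hu' : IsUnit (MvPolynomial.finSuccEquiv F m u) := hu.map _
    obtain ⟨r, hr, hCr⟩ := Polynomial.isUnit_iff.mp hu'
    obtain ⟨c, hc⟩ := ih r hr
    refine ⟨c, ?_⟩
    have h2 : (MvPolynomial.finSuccEquiv F m).symm (Polynomial.C (MvPolynomial.C c)) =
        MvPolynomial.C c := by
      have := MvPolynomial.finSuccEquiv_comp_C_eq_C (R := F) m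
      exact RingHom.congr_fun this c
    have h3 : (MvPolynomial.finSuccEquiv F m).symm (MvPolynomial.finSuccEquiv F m u) = u :=
      (MvPolynomial.finSuccEquiv F m).symm_apply_apply u
    rw [← h3, ← hCr, ← hc, h2]

/-- Units of a multivariate polynomial ring over a field are constants. -/
private lemma mv_isUnit_exists_C {σ F : Type*} [Field F] {u : MvPolynomial σ F}
    (hu : IsUnit u) : ∃ c : F, MvPolynomial.C c = u := by
  classical
  obtain ⟨w, hw⟩ := hu.exists_right_inv
  obtain ⟨s, q₁, q₂, h1, h2⟩ := MvPolynomial.exists_finset_rename₂ u w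
  have hinj : Function.Injective (MvPolynomial.rename (R := F) ((↑) : {x // x ∈ s} → σ)) :=
    MvPolynomial.rename_injective _ Subtype.val_injective
  have hq : q₁ * q₂ = 1 := by
    apply hinj
    rw [map_mul, map_one, ← h1, ← h2, hw]
  have : IsUnit q₁ := IsUnit.of_mul_eq_one _ hq
  -- transfer to `Fin (card s)`
  let e := MvPolynomial.renameEquiv F (s.equivFin)
  have : IsUnit (e q₁) := this.map _
  obtain ⟨c, hc⟩ := mv_isUnit_fin F s.card (e q₁) this
  refine ⟨c, ?_⟩
  have hq₁ : q₁ = MvPolynomial.C c := by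
    have := congrArg e.symm hc
    simpa [e, MvPolynomial.renameEquiv] using this.symm
  rw [h1, hq₁, MvPolynomial.rename_C]

/-- In the rational function field over a field `F`, an element which is a `p ^ m`-th power
for every `m` is a constant. -/
private lemma frac_pow_all_const {σ F : Type*} [Field F] {p : ℕ} (hp : 1 < p)
    {A : FractionRing (MvPolynomial σ F)}
    (h : ∀ m : ℕ, ∃ B : FractionRing (MvPolynomial σ F), B ^ p ^ m = A) :
    ∃ c : F, algebraMap F (FractionRing (MvPolynomial σ F)) c = A := by
  classical
  set R := MvPolynomial σ F with hR
  by_cases hA : A = 0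
  · exact ⟨0, by simp [hA]⟩
  letI : NormalizationMonoid R := UniqueFactorizationMonoid.normalizationMonoid.toNormalizationMonoid
  obtain ⟨f, g, hg, hfg⟩ := IsFractionRing.div_surjective (A := R) A
  have hg0 : g ≠ 0 := nonZeroDivisors.ne_zero hg
  have hgM0 : algebraMap R (FractionRing R) g ≠ 0 := fun h0 =>
    hg0 (IsFractionRing.injective R (FractionRing R) (by rw [h0, map_zero]))
  have hf0 : f ≠ 0 := by
    rintro rfl
    rw [map_zero, zero_div] at hfg
    exact hA hfg.symm
  set m := max (Multiset.card (normalizedFactors f)) (Multiset.card (normalizedFactors g)) + 1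
    with hm
  have hmlt : max (Multiset.card (normalizedFactors f)) (Multiset.card (normalizedFactors g))
      < p ^ m := lt_trans (Nat.lt_succ_self _) (Nat.lt_pow_self (n := m) hp)
  obtain ⟨B, hB⟩ := h m
  have hB0 : B ≠ 0 := by
    rintro rfl
    rw [zero_pow (pow_ne_zero m (Nat.zero_lt_of_lt hp).ne')] at hB
    exact hA hB.symm
  obtain ⟨u, v, hv, huv⟩ := IsFractionRing.div_surjective (A := R) B
  have hv0 : v ≠ 0 := nonZeroDivisors.ne_zero hv
  have hu0 : u ≠ 0 := by
    rintro rfl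
    rw [map_zero, zero_div] at huv
    exact hB0 huv.symm
  obtain ⟨u', v', d, hrel, hdu, hdv⟩ := UniqueFactorizationMonoid.exists_reduced_factors u hu0 v
  have hd0 : d ≠ 0 := fun h0 => hu0 (by rw [← hdu, h0, zero_mul])
  have hv'0 : v' ≠ 0 := fun h0 => hv0 (by rw [← hdv, h0, mul_zero])
  have hu'0 : u' ≠ 0 := fun h0 => hu0 (by rw [← hdu, h0, mul_zero])
  have hdM0 : algebraMap R (FractionRing R) d ≠ 0 := fun h0 =>
    hd0 (IsFractionRing.injective R (FractionRing R) (by rw [h0, map_zero]))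
  have hv'M0 : algebraMap R (FractionRing R) v' ≠ 0 := fun h0 =>
    hv'0 (IsFractionRing.injective R (FractionRing R) (by rw [h0, map_zero]))
  have hBuv : B = algebraMap R _ u' / algebraMap R _ v' := by
    rw [← huv, ← hdu, ← hdv, map_mul, map_mul, mul_div_mul_left _ _ hdM0]
  -- cross-multiplied identity in R
  have key : f * v' ^ p ^ m = g * u' ^ p ^ m := by
    apply IsFractionRing.injective R (FractionRing R)
    have h1 : algebraMap R (FractionRing R) f / algebraMap R _ g =
        (algebraMap R (FractionRing R) u' / algebraMap R _ v') ^ p ^ m := by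
      rw [hfg, ← hBuv, hB]
    rw [div_pow, div_eq_div_iff hgM0 (pow_ne_zero _ hv'M0)] at h1
    rw [map_mul, map_mul, map_pow, map_pow]
    rw [h1]
    ring
  have hrelM : IsRelPrime (u' ^ p ^ m) (v' ^ p ^ m) := hrel.pow
  have hdvd_v : v' ^ p ^ m ∣ g := by
    refine (hrelM.symm).dvd_of_dvd_mul_right (y := g) ?_
    exact ⟨f, by rw [← key]; ring⟩
  have hdvd_u : u' ^ p ^ m ∣ f := by
    refine hrelM.dvd_of_dvd_mul_right (y := f) ?_
    exact ⟨g, by rw [key]; ring⟩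
  -- counting factors forces `u'` and `v'` to be units
  have card_le : ∀ {x y : R}, x ≠ 0 → y ≠ 0 → x ∣ y →
      Multiset.card (normalizedFactors x) ≤ Multiset.card (normalizedFactors y) := by
    intro x y hx hy hxy
    exact Multiset.card_le_card
      ((dvd_iff_normalizedFactors_le_normalizedFactors hx hy).mp hxy)
  have unit_of : ∀ {x : R} {y : R}, x ≠ 0 → y ≠ 0 →
      Multiset.card (normalizedFactors y) < p ^ m → x ^ p ^ m ∣ y → IsUnit x := by
    intro x y hx hy hcard hdvd
    by_contra hnu
    obtain ⟨q, hq⟩ := exists_mem_normalizedFactors hx hnu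
    have h1 : 1 ≤ Multiset.card (normalizedFactors x) :=
      Multiset.card_pos_iff_exists_mem.mpr ⟨q, hq⟩
    have h2 := card_le (pow_ne_zero _ hx) hy hdvd
    rw [normalizedFactors_pow, Multiset.card_nsmul] at h2
    have : p ^ m ≤ p ^ m * Multiset.card (normalizedFactors x) :=
      Nat.le_mul_of_pos_right _ h1
    omega
  have hvunit : IsUnit v' :=
    unit_of hv'0 hg0 (lt_of_le_of_lt (le_max_right _ _) hmlt) hdvd_v
  have huunit : IsUnit u' :=
    unit_of hu'0 hf0 (lt_of_le_of_lt (le_max_left _ _) hmlt) hdvd_u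
  obtain ⟨cu, hcu⟩ := mv_isUnit_exists_C huunit
  obtain ⟨cv, hcv⟩ := mv_isUnit_exists_C hvunit
  have hcv0 : cv ≠ 0 := by
    rintro rfl
    rw [map_zero] at hcv
    exact hv'0 hcv.symm
  have halg : ∀ c : F, algebraMap R (FractionRing R) (MvPolynomial.C c) =
      algebraMap F (FractionRing R) c := by
    intro c
    rw [IsScalarTower.algebraMap_apply F R (FractionRing R)]
    rfl
  refine ⟨(cu / cv) ^ p ^ m, ?_⟩
  rw [← hB, hBuv, ← hcu, ← hcv, halg, halg, map_pow, map_div₀]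

/-- The `p ^ e`-th power map as an algebra homomorphism over `ZMod p`. -/
private noncomputable def pPow (p : ℕ) [Fact p.Prime] (R : Type*) [CommRing R]
    [Algebra (ZMod p) R] [CharP R p] (e : ℕ) : R →ₐ[ZMod p] R where
  toFun z := z ^ p ^ e
  map_one' := one_pow _
  map_mul' x y := mul_pow x y _
  map_zero' := zero_pow (pow_ne_zero e (Fact.out : p.Prime).ne_zero)
  map_add' x y := add_pow_char_pow x y p e
  commutes' c := by
    show (algebraMap (ZMod p) R c) ^ p ^ e = algebraMap (ZMod p) R c
    rw [← map_pow]
    congr 1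
    have : c ^ Fintype.card (ZMod p) ^ e = c := FiniteField.pow_card_pow e c
    rwa [ZMod.card p] at this

private lemma pPow_apply (p : ℕ) [Fact p.Prime] (R : Type*) [CommRing R]
    [Algebra (ZMod p) R] [CharP R p] (e : ℕ) (z : R) : pPow p R e z = z ^ p ^ e := rfl

/-- Let `k = 𝔽_p`, let `K/k` be a field extension, `X ⊆ K` a transcendence
set over `k` and `L = k(X)`.  Let `γ` be a `k`-monomorphism of `L` which raises each `x ∈ X`
to its `p ^ (n x)`-th power, and let `N` exceed every `n x`.  If `a ∈ L` satisfies
`γ a = a ^ (p ^ N)`, then `a ∈ k`. -/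
theorem fixed_by_high_frobenius_mem_base (p : ℕ) [Fact p.Prime]
    (K : Type*) [Field K] [Algebra (ZMod p) K]
    (X : Set K) (hX : AlgebraicIndependent (ZMod p) ((↑) : X → K))
    (L : IntermediateField (ZMod p) K) (hL : L = IntermediateField.adjoin (ZMod p) X)
    (γ : L →ₐ[ZMod p] L) (hγinj : Function.Injective γ)
    (n : K → ℕ)
    (hγX : ∀ x ∈ X, ∀ hx : x ∈ L, (γ ⟨x, hx⟩ : K) = x ^ p ^ n x)
    (N : ℕ) (hN : ∀ x ∈ X, n x < N)
    (a : L) (ha : γ a = a ^ p ^ N) :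
    ∃ c : ZMod p, algebraMap (ZMod p) L c = a := by
  haveI hKp : CharP K p := charP_of_injective_algebraMap (algebraMap (ZMod p) K).injective p
  haveI hLp : CharP L p := charP_of_injective_algebraMap (algebraMap (ZMod p) L).injective p
  haveI : ExpChar L p := .prime Fact.out
  -- the `p^N`-power map on `K` and the composite `y ↦ γ (y ^ p)` from `L` to `K`
  let ψK : K →ₐ[ZMod p] K := pPow p K N
  let δ : L →ₐ[ZMod p] K := L.val.comp (γ.comp (pPow p L 1))
  -- main step: any solution of `γ b = b ^ p ^ N` is a `p`-th power of another solution
  have step : ∀ b : L, γ b = b ^ p ^ N → ∃ c : L, c ^ p = b ∧ γ c = c ^ p ^ N := by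
    intro b hb
    have h2 : IntermediateField.adjoin (ZMod p) (ψK '' X) ≤ δ.fieldRange := by
      rw [IntermediateField.adjoin_le_iff]
      rintro _ ⟨x, hxX, rfl⟩
      have hxL : x ∈ L := by rw [hL]; exact IntermediateField.subset_adjoin _ _ hxX
      have hlt : n x < N := hN x hxX
      have he : n x + (N - n x) = N := Nat.add_sub_cancel' (le_of_lt (hN x hxX))
      have he1 : N - n x ≠ 0 := by omega
      refine ⟨(⟨x, hxL⟩ : L) ^ p ^ (N - n x - 1), ?_⟩
      show (γ (((⟨x, hxL⟩ : L) ^ p ^ (N - n x - 1)) ^ p ^ 1) : K) = ψK x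
      rw [pPow_apply]
      rw [← pow_mul, pow_one, ← pow_succ]
      have hsucc : N - n x - 1 + 1 = N - n x := by omega
      rw [hsucc, map_pow]
      push_cast
      rw [hγX x hxX hxL, ← pow_mul, ← pow_add, he]
    have h1 : (ψK (b : K)) ∈ IntermediateField.adjoin (ZMod p) (ψK '' X) := by
      rw [← IntermediateField.adjoin_map]
      refine ⟨(b : K), ?_, rfl⟩
      rw [← hL]; exact b.2
    obtain ⟨c, hc⟩ := h2 h1
    have hc' : γ (c ^ p) = b ^ p ^ N := by
      have : (γ (c ^ p ^ 1) : K) = (b : K) ^ p ^ N := hc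
      rw [pow_one] at this
      apply Subtype.ext
      push_cast
      exact this
    have hcb : c ^ p = b := hγinj (by rw [hc', hb])
    refine ⟨c, hcb, ?_⟩
    have hfrob : (γ c) ^ p = (c ^ p ^ N) ^ p := by
      rw [← map_pow, hcb, hb, ← hcb, ← pow_mul, ← pow_mul, mul_comm (p ^ N) p]
    exact frobenius_inj L p (by simpa [frobenius_def] using hfrob)
  -- iterate: `a` is a `p ^ m`-th power for every `m`
  have main : ∀ m : ℕ, ∃ b : L, γ b = b ^ p ^ N ∧ b ^ p ^ m = a := by
    intro m
    induction m with
    | zero => exact ⟨a, ha, by simp⟩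
    | succ m ih =>
      obtain ⟨b, hb1, hb2⟩ := ih
      obtain ⟨c, hc1, hc2⟩ := step b hb1
      exact ⟨c, hc2, by rw [pow_succ', pow_mul, hc1, hb2]⟩
  -- transfer to the rational function field
  have hrange : Set.range ((↑) : X → K) = X := Subtype.range_coe
  let e : FractionRing (MvPolynomial X (ZMod p)) ≃ₐ[ZMod p] L :=
    hX.aevalEquivField.trans (IntermediateField.equivOfEq (by rw [hrange, ← hL]))
  have hA : ∀ m : ℕ, ∃ B : FractionRing (MvPolynomial X (ZMod p)),
      B ^ p ^ m = e.symm a := by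
    intro m
    obtain ⟨b, _, hb2⟩ := main m
    exact ⟨e.symm b, by rw [← map_pow, hb2]⟩
  obtain ⟨c, hc⟩ := frac_pow_all_const (Fact.out : p.Prime).one_lt hA
  refine ⟨c, ?_⟩
  have := congrArg e hc
  rwa [AlgEquiv.commutes, AlgEquiv.apply_symm_apply] at this
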